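/- Define e(t;t',t'') for t'' ≤ t ≤ t' as the number of open intervals (a,b) in B with t'' ≤ a < t < b ≤ t'. Then for critical values t_k < t < t_j, the multiplicity of the open interval (t_k,t_j) in B equals e(t; t_j, t_k) - e(t; t_j, t_{k+1}) - e(t; t_{j-1}, t_k) + e(t; t_{j-1}, t_{k+1}). -/
import Mathlib


open Classical Multiset

noncomputable section

/-- The four kinds of intervals: closed-closed, closed-open, open-closed, open-open. -/
inductive BarKind : Type
  | cc | co | oc | oo
  deriving DecidableEq

/-- A real interval of one of the four types, with endpoints `a ≤ b`. -/
structure Bar : Type where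
  kind : BarKind
  a : ℝ
  b : ℝ

instance : DecidableEq Bar := Classical.decEq _

namespace Bar

/-- The underlying set of points of the interval. -/
def toSet (I : Bar) : Set ℝ :=
  match I.kind with
  | .cc => Set.Icc I.a I.b
  | .co => Set.Ico I.a I.b
  | .oc => Set.Ioc I.a I.b
  | .oo => Set.Ioo I.a I.b

/-- Nonemptiness condition: `a ≤ b` for closed intervals, `a < b` otherwise. -/
def Valid (I : Bar) : Prop :=
  match I.kind with
  | .cc => I.a ≤ I.b
  | _ => I.a < I.b

def rightOpen (I : Bar) : Prop := I.kind = .co ∨ I.kind = .oo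
def leftOpen (I : Bar) : Prop := I.kind = .oc ∨ I.kind = .oo
def leftClosed (I : Bar) : Prop := I.kind = .cc ∨ I.kind = .co

end Bar

/-- `i(t,t')`: the number of intervals of `B` containing `[t,t']`. -/
def icount (B : Multiset Bar) (t t' : ℝ) : ℕ :=
  countP (fun I => Set.Icc t t' ⊆ I.toSet) B

/-- `l(t)`: the number of intervals of `B` containing `t`. -/
def lcount (B : Multiset Bar) (t : ℝ) : ℕ :=
  countP (fun I => t ∈ I.toSet) B

/-- `l⁺(t;t')`: intervals of `B` containing `t` with open right endpoint `≤ t'`. -/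
def lplus (B : Multiset Bar) (t t' : ℝ) : ℕ :=
  countP (fun I => t ∈ I.toSet ∧ I.rightOpen ∧ I.b ≤ t') B

/-- `l⁻(t;t'')`: intervals of `B` containing `t` with open left endpoint `≥ t''`. -/
def lminus (B : Multiset Bar) (t t'' : ℝ) : ℕ :=
  countP (fun I => t ∈ I.toSet ∧ I.leftOpen ∧ t'' ≤ I.a) B

/-- `e(t;t',t'')`: open intervals `(a,b)` of `B` with `t'' ≤ a < t < b ≤ t'`. -/
def ecount (B : Multiset Bar) (t t' t'' : ℝ) : ℕ :=
  countP (fun I => I.kind = .oo ∧ t'' ≤ I.a ∧ I.a < t ∧ t < I.b ∧ I.b ≤ t') B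

/-- All endpoints of intervals of `B` lie among the critical values `t 0, …, t N`. -/
def endpointsIn (B : Multiset Bar) (t : ℕ → ℝ) (N : ℕ) : Prop :=
  ∀ I ∈ B, (∃ i ≤ N, I.a = t i) ∧ (∃ j ≤ N, I.b = t j)

lemma stmt6_pointwise (N : ℕ) (t : ℕ → ℝ) (ht : StrictMono t)
    (k j : ℕ) (hkj : k < j) (hjN : j ≤ N)
    (s : ℝ) (h1 : t k < s) (h2 : s < t j) (I : Bar)
    (hIa : ∃ i ≤ N, I.a = t i) (hIb : ∃ m ≤ N, I.b = t m) :
    ((if (⟨.oo, t k, t j⟩ : Bar) = I then 1 else 0 : ℤ)) =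
      (if I.kind = .oo ∧ t k ≤ I.a ∧ I.a < s ∧ s < I.b ∧ I.b ≤ t j then 1 else 0)
      - (if I.kind = .oo ∧ t (k+1) ≤ I.a ∧ I.a < s ∧ s < I.b ∧ I.b ≤ t j then 1 else 0)
      - (if I.kind = .oo ∧ t k ≤ I.a ∧ I.a < s ∧ s < I.b ∧ I.b ≤ t (j-1) then 1 else 0)
      + (if I.kind = .oo ∧ t (k+1) ≤ I.a ∧ I.a < s ∧ s < I.b ∧ I.b ≤ t (j-1) then 1 else 0) := by
  obtain ⟨i, hiN, ha⟩ := hIa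
  obtain ⟨m, hmN, hb⟩ := hIb
  have hkk1 : t k < t (k+1) := ht (Nat.lt_succ_self k)
  have hj1j : t (j-1) < t j := ht (Nat.sub_lt (Nat.lt_of_le_of_lt (Nat.zero_le k) hkj) one_pos)
  by_cases hI : (⟨.oo, t k, t j⟩ : Bar) = I
  · rw [if_pos hI]
    obtain ⟨hk, hA, hB⟩ : I.kind = .oo ∧ I.a = t k ∧ I.b = t j := by
      cases hI; exact ⟨rfl, rfl, rfl⟩
    rw [if_pos ⟨hk, by rw [hA], by rw [hA]; exact h1, by rw [hB]; exact h2, by rw [hB]⟩]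
    rw [if_neg (fun h => absurd (le_trans h.2.1 hA.le) (not_le.2 hkk1))]
    rw [if_neg (fun h => absurd (hB ▸ h.2.2.2.2) (not_le.2 hj1j))]
    rw [if_neg (fun h => absurd (le_trans h.2.1 hA.le) (not_le.2 hkk1))]
    ring
  · rw [if_neg hI]
    by_cases hk : I.kind = .oo
    · by_cases hc : t k ≤ I.a ∧ I.a < s ∧ s < I.b ∧ I.b ≤ t j
      · obtain ⟨hc1, hc2, hc3, hc4⟩ := hc
        have hik : k ≤ i := (ht.le_iff_le).1 (ha ▸ hc1)
        have hmj : m ≤ j := (ht.le_iff_le).1 (hb ▸ hc4)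
        by_cases hi1 : k + 1 ≤ i
        · have hc1' : t (k+1) ≤ I.a := ha ▸ ht.monotone hi1
          rw [if_pos ⟨hk, hc1, hc2, hc3, hc4⟩, if_pos ⟨hk, hc1', hc2, hc3, hc4⟩]
          by_cases hbj : I.b ≤ t (j-1)
          · rw [if_pos ⟨hk, hc1, hc2, hc3, hbj⟩, if_pos ⟨hk, hc1', hc2, hc3, hbj⟩]; ring
          · rw [if_neg (fun h => hbj h.2.2.2.2), if_neg (fun h => hbj h.2.2.2.2)]; ring
        · have hik' : i = k := le_antisymm (Nat.lt_succ_iff.1 (not_le.1 hi1)) hik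
          have haK : I.a = t k := by rw [ha, hik']
          have hmj' : m ≠ j := by
            intro hmj'
            apply hI
            have hbJ : I.b = t j := by rw [hb, hmj']
            cases I with
            | mk kind a b => simp only at hk haK hbJ; rw [hk, haK, hbJ]
          have hbj1 : I.b ≤ t (j-1) := by
            rw [hb]; exact ht.monotone (Nat.le_sub_one_of_lt (lt_of_le_of_ne hmj hmj'))
          rw [if_neg (fun (h : I.kind = .oo ∧ t (k+1) ≤ I.a ∧ I.a < s ∧ s < I.b ∧ I.b ≤ t j) =>
                absurd (le_trans h.2.1 haK.le) (not_le.2 hkk1))]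
          rw [if_neg (fun (h : I.kind = .oo ∧ t (k+1) ≤ I.a ∧ I.a < s ∧ s < I.b ∧ I.b ≤ t (j-1)) =>
                absurd (le_trans h.2.1 haK.le) (not_le.2 hkk1))]
          rw [if_pos ⟨hk, hc1, hc2, hc3, hc4⟩, if_pos ⟨hk, hc1, hc2, hc3, hbj1⟩]
          ring
      · rw [if_neg (fun h => hc ⟨h.2.1, h.2.2.1, h.2.2.2.1, h.2.2.2.2⟩)]
        rw [if_neg (fun h => hc ⟨le_trans hkk1.le h.2.1, h.2.2.1, h.2.2.2.1, h.2.2.2.2⟩)]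
        rw [if_neg (fun h => hc ⟨h.2.1, h.2.2.1, h.2.2.2.1, le_trans h.2.2.2.2 hj1j.le⟩)]
        rw [if_neg (fun h => hc ⟨le_trans hkk1.le h.2.1, h.2.2.1, h.2.2.2.1,
              le_trans h.2.2.2.2 hj1j.le⟩)]
        ring
    · rw [if_neg (fun h => hk h.1), if_neg (fun h => hk h.1), if_neg (fun h => hk h.1),
        if_neg (fun h => hk h.1)]; ring

theorem stmt6 (N : ℕ) (t : ℕ → ℝ) (ht : StrictMono t)
    (B : Multiset Bar) (hB : endpointsIn B t N)
    (k j : ℕ) (hkj : k < j) (hjN : j ≤ N)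
    (s : ℝ) (h1 : t k < s) (h2 : s < t j) :
    (count (⟨.oo, t k, t j⟩ : Bar) B : ℤ) =
      (ecount B s (t j) (t k) : ℤ) - ecount B s (t j) (t (k + 1))
        - ecount B s (t (j - 1)) (t k) + ecount B s (t (j - 1)) (t (k + 1)) := by
  induction B using Multiset.induction with
  | empty => simp [ecount]
  | cons I B ih =>
    have hBI : endpointsIn B t N := fun J hJ => hB J (mem_cons_of_mem hJ)
    have hI := hB I (mem_cons_self I B)
    have key := stmt6_pointwise N t ht k j hkj hjN s h1 h2 I hI.1 hI.2
    simp only [ecount, count_cons, countP_cons] at *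
    push_cast
    push_cast at ih
    rw [ih hBI] at *
    ring_nf
    ring_nf at key ⊢
    linarith [key]
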